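/- Let δ's and θ's denote the restricted isometry and restricted orthogonality constants of a matrix A, with k, u positive integers. Define a_k(S,Š) as in Modified-CS. If θ_{u,u} + δ_{2u} + θ_{u,2u} + δ_k + θ_{u,k}² + 2θ_{2u,k}² < 1 (and the denominators 1 - δ_{2u} - θ_{2u,k}²/(1-δ_k) and 1 - δ_u - θ_{u,k}²/(1-δ_k) are positive), then a_k(2u,u) + a_k(u,u) < 1. -/

import Mathlib

open Matrix BigOperators Finset

noncomputable def cols {m n : ℕ} (A : Matrix (Fin m) (Fin n) ℝ) (T : Finset (Fin n)) :
    Matrix (Fin m) {j // j ∈ T} ℝ :=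
  Matrix.of fun i j => A i j.1

noncomputable def l2 {ι : Type*} [Fintype ι] (v : ι → ℝ) : ℝ :=
  Real.sqrt (∑ i, v i ^ 2)

/-- `δ` is a valid `S`-restricted-isometry bound for `A`. -/
def RIPBound {m n : ℕ} (A : Matrix (Fin m) (Fin n) ℝ) (S : ℕ) (δ : ℝ) : Prop :=
  ∀ T : Finset (Fin n), T.card ≤ S → ∀ c : {j // j ∈ T} → ℝ,
    (1 - δ) * (∑ j, c j ^ 2) ≤ (∑ i, ((cols A T).mulVec c i) ^ 2) ∧
    (∑ i, ((cols A T).mulVec c i) ^ 2) ≤ (1 + δ) * (∑ j, c j ^ 2)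

/-- The `S`-restricted isometry constant `δ_S(A)`: the smallest valid RIP bound. -/
noncomputable def ripConst {m n : ℕ} (A : Matrix (Fin m) (Fin n) ℝ) (S : ℕ) : ℝ :=
  sInf {δ : ℝ | 0 ≤ δ ∧ RIPBound A S δ}

/-- `θ` is a valid `(S₁,S₂)`-restricted-orthogonality bound for `A`. -/
def ROCBound {m n : ℕ} (A : Matrix (Fin m) (Fin n) ℝ) (S₁ S₂ : ℕ) (θ : ℝ) : Prop :=
  ∀ T₁ T₂ : Finset (Fin n), Disjoint T₁ T₂ → T₁.card ≤ S₁ → T₂.card ≤ S₂ →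
    ∀ c₁ : {j // j ∈ T₁} → ℝ, ∀ c₂ : {j // j ∈ T₂} → ℝ,
      |∑ i, (cols A T₁).mulVec c₁ i * (cols A T₂).mulVec c₂ i| ≤ θ * l2 c₁ * l2 c₂

/-- The restricted orthogonality constant `θ_{S₁,S₂}(A)`. -/
noncomputable def rocConst {m n : ℕ} (A : Matrix (Fin m) (Fin n) ℝ) (S₁ S₂ : ℕ) : ℝ :=
  sInf {θ : ℝ | 0 ≤ θ ∧ ROCBound A S₁ S₂ θ}


-- auxiliary lemmas

noncomputable def fro {m n : ℕ} (A : Matrix (Fin m) (Fin n) ℝ) : ℝ := ∑ i, ∑ j, A i j ^ 2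

lemma fro_nonneg {m n : ℕ} (A : Matrix (Fin m) (Fin n) ℝ) : 0 ≤ fro A := by
  apply Finset.sum_nonneg; intro i _; apply Finset.sum_nonneg; intro j _; positivity

lemma sq_sum_mulVec_le {m n : ℕ} (A : Matrix (Fin m) (Fin n) ℝ) (T : Finset (Fin n))
    (c : {j // j ∈ T} → ℝ) :
    (∑ i, ((cols A T).mulVec c i) ^ 2) ≤ fro A * ∑ j, c j ^ 2 := by
  have key : ∀ i, ((cols A T).mulVec c i) ^ 2 ≤ (∑ j, A i j ^ 2) * ∑ j, c j ^ 2 := by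
    intro i
    have h1 : ((cols A T).mulVec c i) ^ 2 ≤ (∑ j, (cols A T) i j ^ 2) * ∑ j, c j ^ 2 :=
      Finset.sum_mul_sq_le_sq_mul_sq _ _ _
    refine h1.trans (mul_le_mul_of_nonneg_right ?_ (by positivity))
    have : (∑ j : {j // j ∈ T}, (cols A T) i j ^ 2) = ∑ j ∈ T, A i j ^ 2 := by
      rw [← Finset.sum_attach T (fun j => A i j ^ 2)]; rfl
    rw [this]
    exact Finset.sum_le_sum_of_subset_of_nonneg (Finset.subset_univ T)
      (fun j _ _ => by positivity)
  calc (∑ i, ((cols A T).mulVec c i) ^ 2) ≤ ∑ i, (∑ j, A i j ^ 2) * ∑ j, c j ^ 2 :=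
        Finset.sum_le_sum (fun i _ => key i)
    _ = fro A * ∑ j, c j ^ 2 := by rw [fro, Finset.sum_mul]

lemma ripBound_all {m n : ℕ} (A : Matrix (Fin m) (Fin n) ℝ) (S : ℕ) :
    RIPBound A S (1 + fro A) := by
  intro T hT c
  constructor
  · have h1 : (1 - (1 + fro A)) * (∑ j, c j ^ 2) ≤ 0 := by
      apply mul_nonpos_of_nonpos_of_nonneg
      · linarith [fro_nonneg A]
      · positivity
    exact h1.trans (by positivity)
  · refine (sq_sum_mulVec_le A T c).trans (mul_le_mul_of_nonneg_right ?_ (by positivity))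
    linarith [fro_nonneg A]

lemma l2_sq_sum_le {m n : ℕ} (A : Matrix (Fin m) (Fin n) ℝ) (T : Finset (Fin n))
    (c : {j // j ∈ T} → ℝ) :
    Real.sqrt (∑ i, ((cols A T).mulVec c i) ^ 2) ≤ Real.sqrt (fro A) * l2 c := by
  rw [l2, ← Real.sqrt_mul (fro_nonneg A)]
  exact Real.sqrt_le_sqrt (sq_sum_mulVec_le A T c)

lemma rocBound_all {m n : ℕ} (A : Matrix (Fin m) (Fin n) ℝ) (S₁ S₂ : ℕ) :
    ROCBound A S₁ S₂ (fro A) := by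
  intro T₁ T₂ _ _ _ c₁ c₂
  set v := (cols A T₁).mulVec c₁
  set w := (cols A T₂).mulVec c₂
  have l2nn : ∀ {ι : Type} [Fintype ι] (f : ι → ℝ), 0 ≤ l2 f := fun f => Real.sqrt_nonneg _
  have h1 : |∑ i, v i * w i| ≤ Real.sqrt (∑ i, v i ^ 2) * Real.sqrt (∑ i, w i ^ 2) := by
    rw [← Real.sqrt_sq_eq_abs, ← Real.sqrt_mul (by positivity)]
    exact Real.sqrt_le_sqrt (Finset.sum_mul_sq_le_sq_mul_sq _ _ _)
  refine h1.trans ?_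
  calc Real.sqrt (∑ i, v i ^ 2) * Real.sqrt (∑ i, w i ^ 2)
      ≤ (Real.sqrt (fro A) * l2 c₁) * (Real.sqrt (fro A) * l2 c₂) := by
        exact mul_le_mul (l2_sq_sum_le A T₁ c₁) (l2_sq_sum_le A T₂ c₂)
          (Real.sqrt_nonneg _) (mul_nonneg (Real.sqrt_nonneg _) (l2nn c₁))
    _ = (Real.sqrt (fro A) * Real.sqrt (fro A)) * l2 c₁ * l2 c₂ := by ring
    _ = fro A * l2 c₁ * l2 c₂ := by rw [Real.mul_self_sqrt (fro_nonneg A)]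

lemma ripConst_nonneg {m n : ℕ} (A : Matrix (Fin m) (Fin n) ℝ) (S : ℕ) :
    0 ≤ ripConst A S :=
  Real.sInf_nonneg (fun _ hx => hx.1)

lemma rocConst_nonneg {m n : ℕ} (A : Matrix (Fin m) (Fin n) ℝ) (S₁ S₂ : ℕ) :
    0 ≤ rocConst A S₁ S₂ :=
  Real.sInf_nonneg (fun _ hx => hx.1)

lemma ripConst_mono {m n : ℕ} (A : Matrix (Fin m) (Fin n) ℝ) {S S' : ℕ} (h : S ≤ S') :
    ripConst A S ≤ ripConst A S' := by
  apply csInf_le_csInf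
  · exact ⟨0, fun x hx => hx.1⟩
  · exact ⟨1 + fro A, by linarith [fro_nonneg A], ripBound_all A S'⟩
  · rintro δ ⟨h0, hb⟩
    exact ⟨h0, fun T hT c => hb T (hT.trans h) c⟩

lemma rocConst_mono_left {m n : ℕ} (A : Matrix (Fin m) (Fin n) ℝ) {S₁ S₁' S₂ : ℕ}
    (h : S₁ ≤ S₁') : rocConst A S₁ S₂ ≤ rocConst A S₁' S₂ := by
  apply csInf_le_csInf
  · exact ⟨0, fun x hx => hx.1⟩
  · exact ⟨fro A, fro_nonneg A, rocBound_all A S₁' S₂⟩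
  · rintro θ ⟨h0, hb⟩
    exact ⟨h0, fun T₁ T₂ hd h1 h2 c₁ c₂ => hb T₁ T₂ hd (h1.trans h) h2 c₁ c₂⟩
lemma key_alg (θuu θu2 δ2 δu d a b : ℝ)
    (hθuu : 0 ≤ θuu) (hθu2 : 0 ≤ θu2) (hδ2 : 0 ≤ δ2) (hδu : 0 ≤ δu) (hd0 : 0 ≤ d)
    (ha : 0 ≤ a) (hb : 0 ≤ b) (hab : a ≤ b) (hδuδ2 : δu ≤ δ2) (hd1 : d < 1)
    (hden1 : 0 < 1 - δ2 - b ^ 2 / (1 - d))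
    (hden2 : 0 < 1 - δu - a ^ 2 / (1 - d))
    (h : θuu + δ2 + θu2 + d + a ^ 2 + 2 * b ^ 2 < 1) :
    (θu2 + a * b / (1 - d)) / (1 - δ2 - b ^ 2 / (1 - d)) +
      (θuu + a * a / (1 - d)) / (1 - δu - a ^ 2 / (1 - d)) < 1 := by
  have he : (0:ℝ) < 1 - d := by linarith
  set e := 1 - d with he'
  set N1 := θu2 + a * b / e with hN1'
  set N2 := θuu + a * a / e with hN2'
  set D1 := 1 - δ2 - b ^ 2 / e with hD1'
  set D2 := 1 - δu - a ^ 2 / e with hD2'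
  have hN1 : 0 ≤ N1 := add_nonneg hθu2 (div_nonneg (mul_nonneg ha hb) he.le)
  have hN2 : 0 ≤ N2 := add_nonneg hθuu (div_nonneg (mul_nonneg ha ha) he.le)
  have hsmall : 0 ≤ 1 - d - a ^ 2 - 2 * b ^ 2 := by linarith
  have key1 : N1 + N2 < D1 := by
    have h2 : (N1 + N2) * e < D1 * e := by
      have eq1 : (N1 + N2) * e = (θu2 + θuu) * e + (a * b + a * a) := by
        rw [hN1', hN2']
        field_simp
        ring
      have eq2 : D1 * e = (1 - δ2) * e - b ^ 2 := by
        rw [hD1']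
        field_simp
      rw [eq1, eq2, he']
      nlinarith [mul_pos (show (0:ℝ) < 1 - δ2 - θu2 - θuu - d - a ^ 2 - 2 * b ^ 2 by linarith) he,
        mul_nonneg hd0 hsmall, mul_nonneg (sub_nonneg.2 hab) hb,
        mul_nonneg (sub_nonneg.2 hab) ha]
    exact lt_of_mul_lt_mul_right h2 he.le
  have key2 : N1 + N2 < D2 := by
    have h2 : (N1 + N2) * e < D2 * e := by
      have eq1 : (N1 + N2) * e = (θu2 + θuu) * e + (a * b + a * a) := by
        rw [hN1', hN2']
        field_simp
        ring
      have eq2 : D2 * e = (1 - δu) * e - a ^ 2 := by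
        rw [hD2']
        field_simp
      rw [eq1, eq2, he']
      nlinarith [mul_pos (show (0:ℝ) < 1 - δ2 - θu2 - θuu - d - a ^ 2 - 2 * b ^ 2 by linarith) he,
        mul_nonneg hd0 hsmall, mul_nonneg (sub_nonneg.2 hab) hb,
        mul_nonneg (sub_nonneg.2 hab) ha,
        mul_nonneg (sub_nonneg.2 hδuδ2) he.le]
    exact lt_of_mul_lt_mul_right h2 he.le
  have hDm : 0 < min D1 D2 := lt_min hden1 hden2
  calc N1 / D1 + N2 / D2
      ≤ N1 / min D1 D2 + N2 / min D1 D2 :=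
        add_le_add (div_le_div_of_nonneg_left hN1 hDm (min_le_left _ _))
          (div_le_div_of_nonneg_left hN2 hDm (min_le_right _ _))
    _ = (N1 + N2) / min D1 D2 := by rw [← add_div]
    _ < 1 := (div_lt_one hDm).2 (lt_min key1 key2)

/-- `a_k(S, Š)` from Modified-CS. -/
noncomputable def aConst {m n : ℕ} (A : Matrix (Fin m) (Fin n) ℝ) (k S S' : ℕ) : ℝ :=
  (rocConst A S' S + rocConst A S' k * rocConst A S k / (1 - ripConst A k)) /
    (1 - ripConst A S - (rocConst A S k) ^ 2 / (1 - ripConst A k))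

/-- `M = I - A_T (A_Tᵀ A_T)⁻¹ A_Tᵀ`, projection onto orthogonal complement of span of `A_T`. -/
noncomputable def projM {m n : ℕ} (A : Matrix (Fin m) (Fin n) ℝ) (T : Finset (Fin n)) :
    Matrix (Fin m) (Fin m) ℝ :=
  1 - cols A T * ((cols A T)ᵀ * cols A T)⁻¹ * (cols A T)ᵀ


theorem stmt11 {m n k u : ℕ} (A : Matrix (Fin m) (Fin n) ℝ)
    (hk : 0 < k) (hu : 0 < u)
    (hδk : ripConst A k < 1)
    (hden1 : 0 < 1 - ripConst A (2 * u) - rocConst A (2 * u) k ^ 2 / (1 - ripConst A k))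
    (hden2 : 0 < 1 - ripConst A u - rocConst A u k ^ 2 / (1 - ripConst A k))
    (h : rocConst A u u + ripConst A (2 * u) + rocConst A u (2 * u) + ripConst A k
        + rocConst A u k ^ 2 + 2 * rocConst A (2 * u) k ^ 2 < 1) :
    aConst A k (2 * u) u + aConst A k u u < 1 := by
  unfold aConst
  exact key_alg _ _ _ _ _ _ _ (rocConst_nonneg A u u) (rocConst_nonneg A u (2 * u))
    (ripConst_nonneg A (2 * u)) (ripConst_nonneg A u) (ripConst_nonneg A k)
    (rocConst_nonneg A u k) (rocConst_nonneg A (2 * u) k)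
    (rocConst_mono_left A (by omega)) (ripConst_mono A (by omega)) hδk hden1 hden2 h
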